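/- A finite simple graph Γ = (V,E) is T₁ (for every edge {u,v} ∈ E there exists w ∈ V−{u,v} with {u,w} ∈ E and {v,w} ∉ E) if and only if every vertex v ∈ V satisfies {v} = ⋂ {C : C is a clique of Γ with v ∈ C}. -/

import Mathlib

/-- A clique of a graph: a maximal set of pairwise adjacent vertices. -/
def IsMaxClique {V : Type*} (Γ : SimpleGraph V) (C : Set V) : Prop :=
  Γ.IsClique C ∧ ∀ D : Set V, Γ.IsClique D → C ⊆ D → C = D

lemma exists_max_clique {V : Type*} [Fintype V] (Γ : SimpleGraph V) {S : Set V}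
    (hS : Γ.IsClique S) : ∃ C, IsMaxClique Γ C ∧ S ⊆ C := by
  obtain ⟨C, hCmem, hmax⟩ := Set.Finite.exists_maximalFor id
    {D : Set V | Γ.IsClique D ∧ S ⊆ D} (Set.toFinite _) ⟨S, hS, subset_rfl⟩
  exact ⟨C, ⟨hCmem.1, fun D hD hCD => hCD.antisymm (hmax ⟨hD, hCmem.2.trans hCD⟩ hCD)⟩, hCmem.2⟩

/-- A finite simple graph is `T₁` (for every edge `{u,v}` there is a third
vertex adjacent to `u` but not to `v`) if and only if every vertex is the intersection of the
cliques containing it. -/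
theorem t1_iff_vertices_are_intersections_of_cliques {V : Type*} [Fintype V]
    (Γ : SimpleGraph V) :
    (∀ u v : V, Γ.Adj u v → ∃ w : V, w ≠ u ∧ w ≠ v ∧ Γ.Adj u w ∧ ¬ Γ.Adj v w) ↔
    (∀ v : V, ({v} : Set V) = ⋂ C ∈ {C : Set V | IsMaxClique Γ C ∧ v ∈ C}, C) := by
  constructor
  · intro hT1 v
    apply Set.eq_of_subset_of_subset
    · intro x hx
      simp only [Set.mem_singleton_iff] at hx
      subst hx
      simp only [Set.mem_iInter, Set.mem_setOf_eq]
      intro C hC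
      exact hC.2
    · intro x hx
      simp only [Set.mem_iInter, Set.mem_setOf_eq, Set.mem_singleton_iff] at hx ⊢
      by_contra hxv
      have hsing : Γ.IsClique ({v} : Set V) := by
        intro a ha b hb hab
        simp only [Set.mem_singleton_iff] at ha hb
        exact absurd (ha.trans hb.symm) hab
      obtain ⟨C0, hC0, hv0⟩ := exists_max_clique Γ hsing
      have hvC0 : v ∈ C0 := hv0 rfl
      have hxC0 : x ∈ C0 := hx C0 ⟨hC0, hvC0⟩
      have hvx : Γ.Adj v x := hC0.1 hvC0 hxC0 (Ne.symm hxv)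
      obtain ⟨w, hwv, hwx, hvw, hxw⟩ := hT1 v x hvx
      have hpair : Γ.IsClique ({v, w} : Set V) := by
        intro a ha b hb hab
        simp only [Set.mem_insert_iff, Set.mem_singleton_iff] at ha hb
        rcases ha with rfl | rfl <;> rcases hb with rfl | rfl
        · exact absurd rfl hab
        · exact hvw
        · exact hvw.symm
        · exact absurd rfl hab
      obtain ⟨C, hC, hsub⟩ := exists_max_clique Γ hpair
      have hvC : v ∈ C := hsub (Set.mem_insert v _)
      have hwC : w ∈ C := hsub (Set.mem_insert_of_mem _ rfl)
      have hxC : x ∈ C := hx C ⟨hC, hvC⟩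
      exact hxw (hC.1 hxC hwC (Ne.symm hwx))
  · intro h u v huv
    by_contra hcon
    push_neg at hcon
    have hvmem : v ∈ ⋂ C ∈ {C : Set V | IsMaxClique Γ C ∧ u ∈ C}, C := by
      simp only [Set.mem_iInter, Set.mem_setOf_eq]
      intro C hC
      have hclq : Γ.IsClique (insert v C) := by
        intro a ha b hb hab
        rcases Set.mem_insert_iff.mp ha with rfl | haC <;>
          rcases Set.mem_insert_iff.mp hb with rfl | hbC
        · exact absurd rfl hab
        · by_cases hbu : b = u
          · subst hbu; exact huv.symm
          · exact hcon b hbu (Ne.symm hab) (hC.1.1 hC.2 hbC (Ne.symm hbu))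
        · by_cases hau : a = u
          · subst hau; exact huv
          · exact (hcon a hau hab (hC.1.1 hC.2 haC (Ne.symm hau))).symm
        · exact hC.1.1 haC hbC hab
      have := hC.1.2 (insert v C) hclq (Set.subset_insert v C)
      rw [this]
      exact Set.mem_insert v C
    rw [← h u] at hvmem
    exact Γ.irrefl (hvmem ▸ huv)
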